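/- Let T ∈ ℝ^{n_1×⋯×n_d} be a tensor admitting a TR-representation with TR-ranks (r_0, r_1, …, r_d), r_d = r_0. Then for every k with 1 ≤ k ≤ d−1, the matrix rank of the k-th unfolding matrix T_⟨k⟩ satisfies rank(T_⟨k⟩) ≤ r_0 · r_k. -/
import Mathlib

/-- Cyclic successor on `Fin d`. -/
def finSucc {d : ℕ} (k : Fin d) : Fin d := ⟨(k.val + 1) % d, Nat.mod_lt _ k.pos⟩

/-- Value of the tensor-ring contraction of cores `G` at the multi-index `i`. -/
def trVal {d : ℕ} (n ρ : Fin d → ℕ)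
    (G : ∀ k : Fin d, Fin (n k) → Matrix (Fin (ρ k)) (Fin (ρ (finSucc k))) ℝ)
    (i : ∀ k : Fin d, Fin (n k)) : ℝ :=
  ∑ α : ∀ k : Fin d, Fin (ρ k), ∏ k : Fin d, G k (i k) (α k) (α (finSucc k))

/-- `(ρ 0, …, ρ (d-1), ρ 0)` is a TR-rank of `T`. -/
def IsTRRank {d : ℕ} (n ρ : Fin d → ℕ) (T : (∀ k : Fin d, Fin (n k)) → ℝ) : Prop :=
  ∃ G : ∀ k : Fin d, Fin (n k) → Matrix (Fin (ρ k)) (Fin (ρ (finSucc k))) ℝ,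
    ∀ i, T i = trVal n ρ G i

/-- The `k`-th unfolding matrix of a tensor. -/
def unfold {d : ℕ} (n : Fin d → ℕ) (T : (∀ k : Fin d, Fin (n k)) → ℝ) (k : ℕ) :
    Matrix (∀ j : {j : Fin d // j.val < k}, Fin (n j.val))
      (∀ j : {j : Fin d // ¬ j.val < k}, Fin (n j.val)) ℝ :=
  Matrix.of fun a b => T (fun j => if h : j.val < k then a ⟨j, h⟩ else b ⟨j, h⟩)

private lemma lsucc_eq {d k : ℕ} (hkd : k < d) {j : Fin d} (hj : j.val < k)
    (h : ¬ (finSucc j).val < k) : finSucc j = ⟨k, hkd⟩ := by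
  have hm : (j.val + 1) % d = j.val + 1 := Nat.mod_eq_of_lt (by omega)
  apply Fin.ext
  simp only [finSucc, hm] at h ⊢
  omega

private lemma rsucc_eq {d k : ℕ} (h0d : 0 < d) (hk1 : 1 ≤ k) {j : Fin d} (hj : ¬ j.val < k)
    (h : (finSucc j).val < k) : finSucc j = ⟨0, h0d⟩ := by
  apply Fin.ext
  have hjd : j.val < d := j.isLt
  simp only [finSucc] at h ⊢
  rcases Nat.lt_or_ge (j.val + 1) d with h1 | h1
  · rw [Nat.mod_eq_of_lt h1] at h ⊢; omega
  · have h2 : j.val + 1 = d := by omega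
    rw [h2, Nat.mod_self]

private lemma pi_cast {d : ℕ} {ρ : Fin d → ℕ} {p : Fin d → Prop}
    (v : ∀ i : {j : Fin d // p j}, Fin (ρ i.val)) {m m' : Fin d} (h : m = m')
    (hm : p m) (hm' : p m') : v ⟨m, hm⟩ = Fin.cast (congrArg ρ h).symm (v ⟨m', hm'⟩) := by
  subst h; rfl

theorem tr_rank_unfolding_le {d : ℕ} (hd : 2 ≤ d) (n ρ : Fin d → ℕ)
    (T : (∀ k : Fin d, Fin (n k)) → ℝ) (hT : IsTRRank n ρ T)
    (k : ℕ) (hk1 : 1 ≤ k) (hk2 : k ≤ d - 1) :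
    (unfold n T k).rank ≤ ρ ⟨0, by omega⟩ * ρ ⟨k, by omega⟩ := by
  obtain ⟨G, hG⟩ := hT
  have hkd : k < d := by omega
  have h0d : 0 < d := by omega
  have hx0 : (⟨0, h0d⟩ : Fin d).val < k := hk1
  have hxk : ¬ (⟨k, hkd⟩ : Fin d).val < k := lt_irrefl k
  -- the left and right partial contractions
  set F : (∀ j : {j : Fin d // j.val < k}, Fin (n j.val)) →
      (∀ j : {j : Fin d // j.val < k}, Fin (ρ j.val)) → Fin (ρ ⟨k, hkd⟩) → ℝ :=
    fun a u y => ∏ j : {j : Fin d // j.val < k},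
      G j (a j) (u j)
        (if h : (finSucc (j : Fin d)).val < k then u ⟨finSucc (j : Fin d), h⟩
         else Fin.cast (congrArg ρ (lsucc_eq hkd j.2 h).symm) y) with hF
  set H : (∀ j : {j : Fin d // ¬ j.val < k}, Fin (n j.val)) →
      (∀ j : {j : Fin d // ¬ j.val < k}, Fin (ρ j.val)) → Fin (ρ ⟨0, h0d⟩) → ℝ :=
    fun b v x => ∏ j : {j : Fin d // ¬ j.val < k},
      G j (b j) (v j)
        (if h : (finSucc (j : Fin d)).val < k then
            Fin.cast (congrArg ρ (rsucc_eq h0d hk1 j.2 h).symm) x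
         else v ⟨finSucc (j : Fin d), h⟩) with hH
  have key : ∀ a b, unfold n T k a b =
      ∑ u : ∀ j : {j : Fin d // j.val < k}, Fin (ρ j.val),
        ∑ v : ∀ j : {j : Fin d // ¬ j.val < k}, Fin (ρ j.val),
          F a u (v ⟨⟨k, hkd⟩, hxk⟩) * H b v (u ⟨⟨0, h0d⟩, hx0⟩) := by
    intro a b
    show T _ = _
    rw [hG, trVal]
    rw [← Equiv.sum_comp (Equiv.piEquivPiSubtypeProd (fun j : Fin d => j.val < k)
      (fun j => Fin (ρ j))).symm, Fintype.sum_prod_type]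
    refine Finset.sum_congr rfl fun u _ => Finset.sum_congr rfl fun v _ => ?_
    rw [hF, hH]
    rw [← Fintype.prod_subtype_mul_prod_subtype (fun j : Fin d => j.val < k)]
    congr 1
    · refine Finset.prod_congr rfl fun j _ => ?_
      simp only [Equiv.piEquivPiSubtypeProd_symm_apply, dif_pos j.2]
      congr 1
      by_cases h : (finSucc (j : Fin d)).val < k
      · rw [dif_pos h, dif_pos h]
      · rw [dif_neg h, dif_neg h]
        exact pi_cast v (lsucc_eq hkd j.2 h) h hxk
    · refine Finset.prod_congr rfl fun j _ => ?_
      simp only [Equiv.piEquivPiSubtypeProd_symm_apply, dif_neg j.2]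
      congr 1
      by_cases h : (finSucc (j : Fin d)).val < k
      · rw [dif_pos h, dif_pos h]
        exact pi_cast u (rsucc_eq h0d hk1 j.2 h) h hx0
      · rw [dif_neg h, dif_neg h]
  -- factorization
  have hBC : unfold n T k =
      (Matrix.of fun a (p : Fin (ρ ⟨0, h0d⟩) × Fin (ρ ⟨k, hkd⟩)) =>
        ∑ u : ∀ j : {j : Fin d // j.val < k}, Fin (ρ j.val),
          if u ⟨⟨0, h0d⟩, hx0⟩ = p.1 then F a u p.2 else 0) *
      (Matrix.of fun (p : Fin (ρ ⟨0, h0d⟩) × Fin (ρ ⟨k, hkd⟩)) b =>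
        ∑ v : ∀ j : {j : Fin d // ¬ j.val < k}, Fin (ρ j.val),
          if v ⟨⟨k, hkd⟩, hxk⟩ = p.2 then H b v p.1 else 0) := by
    ext a b
    rw [Matrix.mul_apply, key a b]
    simp only [Matrix.of_apply]
    simp only [Finset.sum_mul, Finset.mul_sum]
    conv_lhs => rw [Finset.sum_comm]
    conv_rhs => rw [Finset.sum_comm (α := ∀ j : {j : Fin d // ¬ j.val < k}, Fin (ρ j.val))]
    refine Fintype.sum_congr _ _ fun v => ?_
    conv_rhs => rw [Finset.sum_comm (α := ∀ j : {j : Fin d // j.val < k}, Fin (ρ j.val))]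
    refine Fintype.sum_congr _ _ fun u => ?_
    rw [Fintype.sum_prod_type]
    simp only [ite_mul, zero_mul, mul_ite, mul_zero, Finset.sum_ite_irrel,
      Finset.sum_const_zero, Finset.sum_ite_eq, Finset.mem_univ, if_true]
  calc (unfold n T k).rank ≤ _ := by rw [hBC]; exact Matrix.rank_mul_le_left _ _
    _ ≤ Fintype.card (Fin (ρ ⟨0, h0d⟩) × Fin (ρ ⟨k, hkd⟩)) := Matrix.rank_le_card_width _
    _ = ρ ⟨0, h0d⟩ * ρ ⟨k, hkd⟩ := by simp
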